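/- arXiv:1710.09254 — 3 statements merged into one kernel-verified Lean document; each statement's English description precedes it below -/
import Mathlib

section
/- Let s ≥ 1, let b_1, …, b_s ≥ 0, and let N : ℕ^s → ℝ be a nonnegative function of multi-indices such that for every multi-index ν ≠ 0, N(ν) ≤ ∑_{m ≤ ν, m ≠ ν} (∏_{j=1}^s binom(ν_j, m_j)) (∏_{j=1}^s b_j^{ν_j − m_j}) N(m), where the sum is over all multi-indices m with m_j ≤ ν_j for all j and m ≠ ν. Then for every multi-index ν, N(ν) ≤ Λ_{|ν|} · (∏_{j=1}^s b_j^{ν_j}) · N(0), where |ν| = ∑_j ν_j and the sequence (Λ_n) is defined recursively by Λ_0 = 1 and Λ_n = ∑_{i=0}^{n−1} binom(n,i) Λ_i for n ≥ 1. -/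
open Finset

lemma sum_finAntidiagonal_succ {M : Type*} [AddCommMonoid M] (d n : ℕ)
    (F : (Fin (d + 1) → ℕ) → M) :
    ∑ f ∈ Finset.finAntidiagonal (d + 1) n, F f =
      ∑ p ∈ Finset.HasAntidiagonal.antidiagonal n, ∑ g ∈ Finset.finAntidiagonal d p.2, F (Fin.cons p.1 g) := by
  rw [← Finset.sum_sigma (Finset.HasAntidiagonal.antidiagonal n) (fun p => Finset.finAntidiagonal d p.2)
    (fun x => F (Fin.cons x.1.1 x.2))]
  refine Finset.sum_nbij' (fun f : Fin (d+1) → ℕ => (⟨(f 0, ∑ j : Fin d, f j.succ), Fin.tail f⟩ : (_ : ℕ × ℕ) × (Fin d → ℕ)))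
    (fun x => Fin.cons x.1.1 x.2) ?_ ?_ ?_ ?_ ?_
  · intro f hf
    simp only [Finset.mem_finAntidiagonal] at hf
    simp only [Finset.mem_sigma, Finset.HasAntidiagonal.mem_antidiagonal, Finset.mem_finAntidiagonal]
    exact ⟨by rw [← hf, Fin.sum_univ_succ], rfl⟩
  · intro x hx
    simp only [Finset.mem_sigma, Finset.HasAntidiagonal.mem_antidiagonal, Finset.mem_finAntidiagonal] at hx
    simp only [Finset.mem_finAntidiagonal, Fin.sum_univ_succ, Fin.cons_zero, Fin.cons_succ]
    rw [hx.2, hx.1]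
  · intro f hf
    exact Fin.cons_self_tail f
  · intro x hx
    obtain ⟨⟨a, c⟩, g⟩ := x
    simp only [Finset.mem_sigma, Finset.HasAntidiagonal.mem_antidiagonal, Finset.mem_finAntidiagonal] at hx
    simp only [Fin.cons_zero, Fin.cons_succ, Fin.tail_cons, Sigma.mk.inj_iff, Prod.mk.injEq,
      heq_eq_eq, and_true, true_and]
    exact hx.2
  · intro f hf
    simp only [Fin.cons_self_tail]

lemma vdm : ∀ (d : ℕ) (ν : Fin d → ℕ) (i : ℕ),
    ∑ m ∈ Finset.finAntidiagonal d i, ∏ j, (ν j).choose (m j) = (∑ j, ν j).choose i := by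
  intro d
  induction d with
  | zero =>
    intro ν i
    rcases Nat.eq_zero_or_pos i with rfl | hi
    · have h1 : Finset.finAntidiagonal 0 (0 : ℕ) = {0} := by
        ext f; simp [Subsingleton.elim f 0]
      simp [h1]
    · have h2 : Finset.finAntidiagonal 0 i = ∅ := by
        ext f
        simp only [Finset.mem_finAntidiagonal, Finset.notMem_empty, iff_false]
        simpa using hi.ne
      simp [h2, Nat.choose_eq_zero_of_lt hi]
  | succ d ih =>
    intro ν i
    rw [sum_finAntidiagonal_succ, Fin.sum_univ_succ, Nat.add_choose_eq]
    refine Finset.sum_congr rfl fun p hp => ?_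
    simp only [Fin.prod_univ_succ, Fin.cons_zero, Fin.cons_succ]
    rw [← Finset.mul_sum, ih (fun j => ν j.succ) p.2]

theorem stmt14 (s : ℕ) (hs : 1 ≤ s) (b : Fin s → ℝ) (hb : ∀ j, 0 ≤ b j)
    (Λ : ℕ → ℝ) (h0 : Λ 0 = 1)
    (hrec : ∀ n : ℕ, 1 ≤ n → Λ n = ∑ i ∈ Finset.range n, (n.choose i : ℝ) * Λ i)
    (N : (Fin s → ℕ) → ℝ) (hN : ∀ ν, 0 ≤ N ν)
    (hrecN : ∀ ν : Fin s → ℕ, ν ≠ 0 →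
      N ν ≤ ∑ m ∈ (Finset.Iic ν).erase ν,
        (∏ j, ((ν j).choose (m j) : ℝ)) * (∏ j, b j ^ (ν j - m j)) * N m)
    (ν : Fin s → ℕ) :
    N ν ≤ Λ (∑ j, ν j) * (∏ j, b j ^ ν j) * N 0 := by
  suffices H : ∀ n (ν : Fin s → ℕ), ∑ j, ν j = n →
      N ν ≤ Λ (∑ j, ν j) * (∏ j, b j ^ ν j) * N 0 from H _ ν rfl
  intro n
  induction n using Nat.strong_induction_on with
  | _ n ih =>
    intro ν hn
    by_cases hν : ν = 0
    · subst hν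
      simp [h0, le_refl]
    · -- basic facts about members of the erased Iic
      set S := (Finset.Iic ν).erase ν with hS
      have hmem : ∀ m ∈ S, (∀ j, m j ≤ ν j) ∧ m ≠ ν := by
        intro m hm
        rw [hS, Finset.mem_erase, Finset.mem_Iic] at hm
        exact ⟨fun j => hm.2 j, hm.1⟩
      have hlt : ∀ m ∈ S, ∑ j, m j < ∑ j, ν j := by
        intro m hm
        obtain ⟨hle, hne⟩ := hmem m hm
        obtain ⟨j, hj⟩ : ∃ j, m j ≠ ν j := by
          by_contra h
          push_neg at h
          exact hne (funext h)
        exact Finset.sum_lt_sum (fun j _ => hle j)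
          ⟨j, Finset.mem_univ j, lt_of_le_of_ne (hle j) hj⟩
      have hT1 : 1 ≤ ∑ j, ν j := by
        rcases Nat.eq_zero_or_pos (∑ j, ν j) with h | h
        · exfalso
          apply hν
          funext j
          exact Finset.sum_eq_zero_iff.mp h j (Finset.mem_univ j)
        · exact h
      -- the key combinatorial identity
      have hfiber : ∀ i ∈ Finset.range (∑ j, ν j),
          ∑ m ∈ S.filter (fun m => ∑ j, m j = i), ∏ j, ((ν j).choose (m j) : ℝ)
            = ((∑ j, ν j).choose i : ℝ) := by
        intro i hi
        rw [Finset.mem_range] at hi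
        have hnat : ∑ m ∈ S.filter (fun m => ∑ j, m j = i),
            ∏ j, (ν j).choose (m j) = (∑ j, ν j).choose i := by
          rw [← vdm s ν i]
          apply Finset.sum_subset
          · intro m hm
            rw [Finset.mem_filter] at hm
            rw [Finset.mem_finAntidiagonal]
            exact hm.2
          · intro x hx hxn
            rw [Finset.mem_finAntidiagonal] at hx
            have hxν : x ≠ ν := by
              rintro rfl
              exact absurd hx hi.ne'
            have : ¬ (∀ j, x j ≤ ν j) := by
              intro hle
              apply hxn
              rw [Finset.mem_filter, hS, Finset.mem_erase, Finset.mem_Iic]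
              exact ⟨⟨hxν, fun j => hle j⟩, hx⟩
            push_neg at this
            obtain ⟨j, hj⟩ := this
            exact Finset.prod_eq_zero (Finset.mem_univ j) (Nat.choose_eq_zero_of_lt hj)
        calc ∑ m ∈ S.filter (fun m => ∑ j, m j = i), ∏ j, ((ν j).choose (m j) : ℝ)
            = ((∑ m ∈ S.filter (fun m => ∑ j, m j = i), ∏ j, (ν j).choose (m j) : ℕ) : ℝ) := by
              push_cast; rfl
          _ = _ := by rw [hnat]
      have hkey : ∑ m ∈ S, (∏ j, ((ν j).choose (m j) : ℝ)) * Λ (∑ j, m j)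
          = Λ (∑ j, ν j) := by
        rw [hrec _ hT1]
        rw [← Finset.sum_fiberwise_of_maps_to (g := fun m => ∑ j, m j)
          (fun m hm => Finset.mem_range.mpr (hlt m hm))]
        refine Finset.sum_congr rfl fun i hi => ?_
        rw [← hfiber i hi, Finset.sum_mul]
        refine Finset.sum_congr rfl fun m hm => ?_
        rw [Finset.mem_filter] at hm
        rw [hm.2]
      -- the main estimate
      have step1 := hrecN ν hν
      have step2 : ∑ m ∈ S,
            (∏ j, ((ν j).choose (m j) : ℝ)) * (∏ j, b j ^ (ν j - m j)) * N m
          ≤ ∑ m ∈ S,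
            (∏ j, ((ν j).choose (m j) : ℝ)) * (∏ j, b j ^ (ν j - m j)) *
              (Λ (∑ j, m j) * (∏ j, b j ^ m j) * N 0) := by
        refine Finset.sum_le_sum fun m hm => ?_
        have hco : (0:ℝ) ≤ (∏ j, ((ν j).choose (m j) : ℝ)) * (∏ j, b j ^ (ν j - m j)) := by
          apply mul_nonneg
          · exact Finset.prod_nonneg fun j _ => Nat.cast_nonneg _
          · exact Finset.prod_nonneg fun j _ => pow_nonneg (hb j) _
        have := ih (∑ j, m j) (hn ▸ hlt m hm) m rfl
        exact mul_le_mul_of_nonneg_left this hco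
      have step3 : ∑ m ∈ S,
            (∏ j, ((ν j).choose (m j) : ℝ)) * (∏ j, b j ^ (ν j - m j)) *
              (Λ (∑ j, m j) * (∏ j, b j ^ m j) * N 0)
          = Λ (∑ j, ν j) * (∏ j, b j ^ ν j) * N 0 := by
        rw [← hkey, Finset.sum_mul, Finset.sum_mul]
        refine Finset.sum_congr rfl fun m hm => ?_
        have hprod : (∏ j, b j ^ (ν j - m j)) * (∏ j, b j ^ m j) = ∏ j, b j ^ ν j := by
          rw [← Finset.prod_mul_distrib]
          refine Finset.prod_congr rfl fun j _ => ?_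
          rw [← pow_add, Nat.sub_add_cancel ((hmem m hm).1 j)]
        calc (∏ j, ((ν j).choose (m j) : ℝ)) * (∏ j, b j ^ (ν j - m j)) *
              (Λ (∑ j, m j) * (∏ j, b j ^ m j) * N 0)
            = (∏ j, ((ν j).choose (m j) : ℝ)) * Λ (∑ j, m j) *
              ((∏ j, b j ^ (ν j - m j)) * (∏ j, b j ^ m j) * N 0) := by ring
          _ = _ := by rw [hprod, ← mul_assoc]
      exact step1.trans (step2.trans_eq step3)
end

section
/- For integers m ≥ 1 and d ≥ 1, set s = (2m)^d. Let r : (ℤ/2mℤ)^d → ℝ satisfy the evenness condition r(−k) = r(k) for all k, and let R be the s × s real matrix indexed by k, k' ∈ {0,…,2m−1}^d with entries R_{k,k'} = r(k − k'), the difference taken componentwise modulo 2m. For each k define λ_k = ∑_{k' ∈ {0,…,2m−1}^d} r(k') exp(2πi (k·k')/(2m)). Then every λ_k is a real number, and R = Q Λ Q, where Λ is the diagonal matrix with diagonal entries λ_k and Q = Re(F) + Im(F) for the d-dimensional Fourier matrix F with entries F_{k,k'} = (1/√s) exp(2πi (k·k')/(2m)). -/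
open Complex Finset

namespace Stmt16Aux

variable {N d : ℕ} [NeZero N]

def P (k k' : Fin d → ZMod N) : ZMod N := ∑ j, k j * k' j

omit [NeZero N] in
lemma P_comm (k k' : Fin d → ZMod N) : P k k' = P k' k := by
  simp [P, mul_comm]

omit [NeZero N] in
lemma P_add_right (k a b : Fin d → ZMod N) : P k (a + b) = P k a + P k b := by
  simp [P, mul_add, Finset.sum_add_distrib]

omit [NeZero N] in
lemma P_neg_right (k a : Fin d → ZMod N) : P k (-a) = - P k a := by
  simp [P]

lemma psi_natCast (n : ℕ) :
    Complex.exp (2 * Real.pi * Complex.I * (n : ℂ) / (N : ℂ)) =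
      ZMod.stdAddChar ((n : ZMod N)) := by
  have h := ZMod.stdAddChar_coe (N := N) (n : ℤ)
  push_cast at h
  rw [h]

lemma psi_conj (t : ZMod N) :
    (starRingEnd ℂ) (ZMod.stdAddChar t) = ZMod.stdAddChar (-t) := by
  have h1 : ZMod.stdAddChar t * ZMod.stdAddChar (-t) = 1 := by
    rw [← AddChar.map_add_eq_mul]; simp
  have h2 : ZMod.stdAddChar t * (starRingEnd ℂ) (ZMod.stdAddChar t) = 1 := by
    rw [Complex.mul_conj]
    norm_cast
    rw [Complex.normSq_eq_norm_sq, ZMod.stdAddChar_apply, Circle.norm_coe]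
    norm_num
  have h0 : ZMod.stdAddChar t ≠ 0 := by
    intro h
    rw [h, zero_mul] at h2
    exact zero_ne_one h2
  exact mul_left_cancel₀ h0 (h2.trans h1.symm)

lemma psi_sum {ι : Type*} (s : Finset ι) (f : ι → ZMod N) :
    ZMod.stdAddChar (∑ j ∈ s, f j) = ∏ j ∈ s, ZMod.stdAddChar (f j) := by
  classical
  induction s using Finset.induction_on with
  | empty => simp
  | insert _ _ h ih =>
      rw [Finset.sum_insert h, AddChar.map_add_eq_mul, ih, Finset.prod_insert h]

lemma psi_P_mul (x y k' : Fin d → ZMod N) :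
    ZMod.stdAddChar (P k' x) * ZMod.stdAddChar (P k' y) =
      ZMod.stdAddChar (P k' (x + y)) := by
  rw [P_add_right, AddChar.map_add_eq_mul]

lemma orth (g : Fin d → ZMod N) :
    ∑ k' : Fin d → ZMod N, ZMod.stdAddChar (P k' g) =
      if g = 0 then ((N ^ d : ℕ) : ℂ) else 0 := by
  classical
  have h : ∀ k' : Fin d → ZMod N,
      ZMod.stdAddChar (P k' g) = ∏ j, ZMod.stdAddChar (k' j * g j) :=
    fun k' => psi_sum _ _
  simp_rw [h]
  rw [← Fintype.piFinset_univ, Finset.sum_prod_piFinset Finset.univ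
    (fun j x => ZMod.stdAddChar (x * g j))]
  have h1 : ∀ j : Fin d, (∑ x : ZMod N, ZMod.stdAddChar (x * g j)) =
      if g j = 0 then ((N : ℕ) : ℂ) else 0 := by
    intro j
    rw [AddChar.sum_mulShift (g j) (ZMod.isPrimitive_stdAddChar N)]
    simp [ZMod.card]
  simp_rw [h1]
  by_cases hg : g = 0
  · simp [hg]
  · obtain ⟨j, hj⟩ : ∃ j, g j ≠ 0 := by
      by_contra hc
      push_neg at hc
      exact hg (funext hc)
    rw [if_neg hg]
    exact Finset.prod_eq_zero (Finset.mem_univ j) (by simp [hj])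

lemma sum_r_ite {α : Type*} [Fintype α] [DecidableEq α] (w : α → ℂ) (t₀ : α) (X : ℂ) :
    (∑ t, w t * (if t = t₀ then X else 0)) = w t₀ * X := by
  rw [Finset.sum_eq_single t₀]
  · simp
  · intro t _ ht; simp [ht]
  · intro h; exact absurd (Finset.mem_univ t₀) h

/-- The key computation. -/
theorem key (r : (Fin d → ZMod N) → ℝ) (hr : ∀ k, r (-k) = r k)
    (c : ℂ) (hcs : c ^ 2 * ((N ^ d : ℕ) : ℂ) = 1)
    (k k'' : Fin d → ZMod N) :
    (∑ k' : Fin d → ZMod N,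
      (c * ((1 - Complex.I) / 2 * ZMod.stdAddChar (P k' k)
          + (1 + Complex.I) / 2 * ZMod.stdAddChar (P k' (-k)))) *
      (∑ t, (r t : ℂ) * ZMod.stdAddChar (P k' t)) *
      (c * ((1 - Complex.I) / 2 * ZMod.stdAddChar (P k' k'')
          + (1 + Complex.I) / 2 * ZMod.stdAddChar (P k' (-k''))))) = (r (k - k'') : ℂ) := by
  classical
  set a : ℂ := (1 - Complex.I) / 2 with ha
  set b : ℂ := (1 + Complex.I) / 2 with hb
  set X : ℂ := ((N ^ d : ℕ) : ℂ) with hX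
  have step1 : ∀ k' : Fin d → ZMod N,
      (c * (a * ZMod.stdAddChar (P k' k) + b * ZMod.stdAddChar (P k' (-k)))) *
      (∑ t, (r t : ℂ) * ZMod.stdAddChar (P k' t)) *
      (c * (a * ZMod.stdAddChar (P k' k'') + b * ZMod.stdAddChar (P k' (-k'')))) =
      ∑ t, (r t : ℂ) * (c ^ 2 *
        (a * a * ZMod.stdAddChar (P k' (k + t + k''))
        + a * b * ZMod.stdAddChar (P k' (k + t + -k''))
        + a * b * ZMod.stdAddChar (P k' (-k + t + k''))
        + b * b * ZMod.stdAddChar (P k' (-k + t + -k'')))) := by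
    intro k'
    rw [Finset.mul_sum, Finset.sum_mul]
    refine Finset.sum_congr rfl fun t _ => ?_
    rw [← psi_P_mul (k + t) k'' k', ← psi_P_mul (k + t) (-k'') k',
        ← psi_P_mul (-k + t) k'' k', ← psi_P_mul (-k + t) (-k'') k',
        ← psi_P_mul k t k', ← psi_P_mul (-k) t k']
    ring
  calc
    (∑ k' : Fin d → ZMod N,
      (c * (a * ZMod.stdAddChar (P k' k) + b * ZMod.stdAddChar (P k' (-k)))) *
      (∑ t, (r t : ℂ) * ZMod.stdAddChar (P k' t)) *
      (c * (a * ZMod.stdAddChar (P k' k'') + b * ZMod.stdAddChar (P k' (-k'')))))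
      = ∑ k' : Fin d → ZMod N, ∑ t, (r t : ℂ) * (c ^ 2 *
        (a * a * ZMod.stdAddChar (P k' (k + t + k''))
        + a * b * ZMod.stdAddChar (P k' (k + t + -k''))
        + a * b * ZMod.stdAddChar (P k' (-k + t + k''))
        + b * b * ZMod.stdAddChar (P k' (-k + t + -k'')))) :=
      Finset.sum_congr rfl fun k' _ => step1 k'
    _ = ∑ t, ∑ k' : Fin d → ZMod N, (r t : ℂ) * (c ^ 2 *
        (a * a * ZMod.stdAddChar (P k' (k + t + k''))
        + a * b * ZMod.stdAddChar (P k' (k + t + -k''))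
        + a * b * ZMod.stdAddChar (P k' (-k + t + k''))
        + b * b * ZMod.stdAddChar (P k' (-k + t + -k'')))) := Finset.sum_comm
    _ = ∑ t, (r t : ℂ) * (c ^ 2 *
        (a * a * (if k + t + k'' = 0 then X else 0)
        + a * b * (if k + t + -k'' = 0 then X else 0)
        + a * b * (if -k + t + k'' = 0 then X else 0)
        + b * b * (if -k + t + -k'' = 0 then X else 0))) := by
      refine Finset.sum_congr rfl fun t _ => ?_
      rw [← Finset.mul_sum]
      congr 1
      rw [← Finset.mul_sum]
      congr 1
      simp only [Finset.sum_add_distrib]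
      rw [← Finset.mul_sum, ← Finset.mul_sum, ← Finset.mul_sum, ← Finset.mul_sum,
          orth, orth, orth, orth]
    _ = ∑ t, ((c ^ 2 * (a * a)) * ((r t : ℂ) * (if t = -k - k'' then X else 0))
        + (c ^ 2 * (a * b)) * ((r t : ℂ) * (if t = k'' - k then X else 0))
        + (c ^ 2 * (a * b)) * ((r t : ℂ) * (if t = k - k'' then X else 0))
        + (c ^ 2 * (b * b)) * ((r t : ℂ) * (if t = k + k'' then X else 0))) := by
      refine Finset.sum_congr rfl fun t _ => ?_
      have e1 : (k + t + k'' = 0) ↔ (t = -k - k'') :=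
        ⟨fun h => by linear_combination h, fun h => by linear_combination h⟩
      have e2 : (k + t + -k'' = 0) ↔ (t = k'' - k) :=
        ⟨fun h => by linear_combination h, fun h => by linear_combination h⟩
      have e3 : (-k + t + k'' = 0) ↔ (t = k - k'') :=
        ⟨fun h => by linear_combination h, fun h => by linear_combination h⟩
      have e4 : (-k + t + -k'' = 0) ↔ (t = k + k'') :=
        ⟨fun h => by linear_combination h, fun h => by linear_combination h⟩
      simp only [e1, e2, e3, e4]
      ring
    _ = (c ^ 2 * (a * a)) * ((r (-k - k'') : ℂ) * X)
        + (c ^ 2 * (a * b)) * ((r (k'' - k) : ℂ) * X)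
        + (c ^ 2 * (a * b)) * ((r (k - k'') : ℂ) * X)
        + (c ^ 2 * (b * b)) * ((r (k + k'') : ℂ) * X) := by
      rw [Finset.sum_add_distrib, Finset.sum_add_distrib, Finset.sum_add_distrib,
          ← Finset.mul_sum, ← Finset.mul_sum, ← Finset.mul_sum, ← Finset.mul_sum,
          sum_r_ite, sum_r_ite, sum_r_ite, sum_r_ite]
    _ = (r (k - k'') : ℂ) := by
      have h1 : r (-k - k'') = r (k + k'') := by
        rw [show -k - k'' = -(k + k'') by ring, hr]
      have h2 : r (k'' - k) = r (k - k'') := by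
        rw [show k'' - k = -(k - k'') by ring, hr]
      rw [h1, h2]
      have haa : a * a + b * b = 0 := by
        rw [ha, hb]; linear_combination (1 / 2 : ℂ) * Complex.I_sq
      have hab : a * b = 1 / 2 := by
        rw [ha, hb]; linear_combination (-1 / 4 : ℂ) * Complex.I_sq
      have hX1 : c ^ 2 * X = 1 := hcs
      linear_combination (c ^ 2 * X * (r (k + k'') : ℂ)) * haa
        + (2 * c ^ 2 * X * (r (k - k'') : ℂ)) * hab
        + (r (k - k'') : ℂ) * hcs

end Stmt16Aux

open Stmt16Aux

theorem stmt16 (m d : ℕ) [NeZero m] (hd : 1 ≤ d)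
    (s : ℕ) (hs : s = (2 * m) ^ d)
    (r : (Fin d → ZMod (2 * m)) → ℝ) (hr : ∀ k, r (-k) = r k)
    (R : Matrix (Fin d → ZMod (2 * m)) (Fin d → ZMod (2 * m)) ℝ)
    (hR : ∀ k k', R k k' = r (k - k'))
    (lam : (Fin d → ZMod (2 * m)) → ℂ)
    (hlam : ∀ k, lam k = ∑ k', (r k' : ℂ) *
      Complex.exp (2 * Real.pi * Complex.I *
        ((∑ j, (k j).val * (k' j).val : ℕ) : ℂ) / ((2 * m : ℕ) : ℂ)))
    (F : Matrix (Fin d → ZMod (2 * m)) (Fin d → ZMod (2 * m)) ℂ)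
    (hF : ∀ k k', F k k' = ((1 / Real.sqrt s : ℝ) : ℂ) *
      Complex.exp (2 * Real.pi * Complex.I *
        ((∑ j, (k j).val * (k' j).val : ℕ) : ℂ) / ((2 * m : ℕ) : ℂ)))
    (Q : Matrix (Fin d → ZMod (2 * m)) (Fin d → ZMod (2 * m)) ℝ)
    (hQ : ∀ k k', Q k k' = (F k k').re + (F k k').im) :
    (∀ k, (lam k).im = 0) ∧
    R = Q * Matrix.diagonal (fun k => (lam k).re) * Q := by
  classical
  have hm : 0 < m := Nat.pos_of_ne_zero (NeZero.ne m)
  have hs0 : 0 < s := by rw [hs]; positivity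
  have hE : ∀ (k k' : Fin d → ZMod (2 * m)),
      Complex.exp (2 * Real.pi * Complex.I *
        ((∑ j, (k j).val * (k' j).val : ℕ) : ℂ) / ((2 * m : ℕ) : ℂ)) =
      ZMod.stdAddChar (P k k') := by
    intro k k'
    rw [psi_natCast (N := 2 * m) (∑ j, (k j).val * (k' j).val)]
    congr 1
    push_cast [ZMod.natCast_zmod_val]
    rfl
  have hlam' : ∀ k, lam k = ∑ k', (r k' : ℂ) * ZMod.stdAddChar (P k' k) := by
    intro k
    rw [hlam k]
    exact Finset.sum_congr rfl fun k' _ => by rw [hE k k', P_comm]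
  have him : ∀ k, (lam k).im = 0 := by
    intro k
    rw [← Complex.conj_eq_iff_im, hlam' k, map_sum]
    have hterm : ∀ k' : Fin d → ZMod (2 * m),
        (starRingEnd ℂ) ((r k' : ℂ) * ZMod.stdAddChar (P k' k)) =
        (r (-k') : ℂ) * ZMod.stdAddChar (P (-k') k) := by
      intro k'
      rw [map_mul, Complex.conj_ofReal, psi_conj, hr]
      have hP : -P k' k = P (-k') k := by rw [P_comm (-k') k, P_neg_right, P_comm]
      rw [hP]
    simp_rw [hterm]
    exact Fintype.sum_equiv (Equiv.neg _) _ _ (fun x => rfl)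
  refine ⟨him, ?_⟩
  have hre : ∀ k', (((lam k').re : ℝ) : ℂ) = lam k' :=
    fun k' => Complex.ext (by simp) (by simp [him k'])
  have hcs : ((1 / Real.sqrt s : ℝ) : ℂ) ^ 2 * (((2 * m) ^ d : ℕ) : ℂ) = 1 := by
    rw [← hs]
    have h1 : ((1 / Real.sqrt s : ℝ)) ^ 2 * ((s : ℕ) : ℝ) = 1 := by
      rw [div_pow, one_pow, Real.sq_sqrt (by positivity : (0:ℝ) ≤ ((s:ℕ):ℝ))]
      field_simp
    calc ((1 / Real.sqrt s : ℝ) : ℂ) ^ 2 * ((s : ℕ) : ℂ)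
        = ((((1 / Real.sqrt s : ℝ)) ^ 2 * ((s : ℕ) : ℝ) : ℝ) : ℂ) := by push_cast; ring
      _ = 1 := by rw [h1]; norm_num
  have hQc : ∀ x y : Fin d → ZMod (2 * m), ((Q x y : ℝ) : ℂ) =
      ((1 / Real.sqrt s : ℝ) : ℂ) * ((1 - Complex.I) / 2 * ZMod.stdAddChar (P x y)
        + (1 + Complex.I) / 2 * ZMod.stdAddChar (P x (-y))) := by
    intro x y
    have hFc : F x y = ((1 / Real.sqrt s : ℝ) : ℂ) * ZMod.stdAddChar (P x y) := by
      rw [hF, hE x y]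
    have hFconj : (starRingEnd ℂ) (F x y) =
        ((1 / Real.sqrt s : ℝ) : ℂ) * ZMod.stdAddChar (P x (-y)) := by
      rw [hFc, map_mul, Complex.conj_ofReal, psi_conj, ← P_neg_right]
    have hre2 : (((F x y).re : ℝ) : ℂ) = (F x y + (starRingEnd ℂ) (F x y)) / 2 := by
      rw [Complex.add_conj]; push_cast; ring
    have him2 : (((F x y).im : ℝ) : ℂ) = (F x y - (starRingEnd ℂ) (F x y)) / (2 * Complex.I) := by
      rw [Complex.sub_conj]
      field_simp
      push_cast
      ring
    rw [hQ x y, Complex.ofReal_add, hre2, him2, hFconj, hFc]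
    have hI := Complex.I_sq
    push_cast
    field_simp
    ring_nf
    linear_combination ((((Real.sqrt s : ℝ) : ℂ))⁻¹ *
      (ZMod.stdAddChar (P x y) - ZMod.stdAddChar (P x (-y)))) * hI
  have hQ1 : ∀ k k' : Fin d → ZMod (2 * m), ((Q k k' : ℝ) : ℂ) =
      ((1 / Real.sqrt s : ℝ) : ℂ) * ((1 - Complex.I) / 2 * ZMod.stdAddChar (P k' k)
        + (1 + Complex.I) / 2 * ZMod.stdAddChar (P k' (-k))) := by
    intro k k'
    rw [hQc k k', P_comm k k']
    have : P k (-k') = P k' (-k) := by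
      rw [P_neg_right, P_comm, ← P_neg_right]
    rw [this]
  ext k k''
  rw [hR, Matrix.mul_apply]
  simp_rw [Matrix.mul_diagonal]
  have main := key (N := 2 * m) (d := d) r hr ((1 / Real.sqrt s : ℝ) : ℂ) hcs k k''
  apply Complex.ofReal_injective
  push_cast
  calc (r (k - k'') : ℂ)
      = ∑ k' : Fin d → ZMod (2 * m),
        (((1 / Real.sqrt s : ℝ) : ℂ) * ((1 - Complex.I) / 2 * ZMod.stdAddChar (P k' k)
          + (1 + Complex.I) / 2 * ZMod.stdAddChar (P k' (-k)))) *
        (∑ t, (r t : ℂ) * ZMod.stdAddChar (P k' t)) *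
        (((1 / Real.sqrt s : ℝ) : ℂ) * ((1 - Complex.I) / 2 * ZMod.stdAddChar (P k' k'')
          + (1 + Complex.I) / 2 * ZMod.stdAddChar (P k' (-k'')))) := main.symm
    _ = ∑ k' : Fin d → ZMod (2 * m),
        ((Q k k' : ℝ) : ℂ) * (((lam k').re : ℝ) : ℂ) * ((Q k' k'' : ℝ) : ℂ) := by
      refine Finset.sum_congr rfl fun k' _ => ?_
      rw [hQ1 k k', hQc k' k'', hre k', hlam' k']
      congr 2
      exact Finset.sum_congr rfl fun t _ => by rw [P_comm t k']
end

section
/- Let κ ∈ (1/2, 1), set p = 2κ/(1+κ), and let c > 0 and K ≥ 0. Then the series C := ∑_{ℓ=0}^∞ (ℓ!)^{p−1} (c^{p/2} K)^ℓ converges, and for every finite set S and every family (b_j)_{j∈S} of nonnegative reals with ∑_{j∈S} b_j^p ≤ K, one has ∑_{u ⊆ S} ((|u|!)² ∏_{j∈u} (c b_j²))^{κ/(1+κ)} ≤ C, where the sum is over all subsets u of S (the empty subset contributing 1). In particular the left-hand side is bounded independently of the cardinality of S. -/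
open Finset Real Filter

private lemma binom_aux (T a : ℝ) (hT : 0 ≤ T) (ha : 0 ≤ a) (m : ℕ) :
    T ^ (m + 1) + (m + 1 : ℝ) * a * T ^ m ≤ (T + a) ^ (m + 1) := by
  induction m with
  | zero => simp
  | succ m ih =>
      have hTa : 0 ≤ T ^ m := pow_nonneg hT m
      have hm : (0:ℝ) ≤ (m:ℝ) := Nat.cast_nonneg m
      push_cast
      calc T ^ (m + 1 + 1) + ((m:ℝ) + 1 + 1) * a * T ^ (m + 1)
          ≤ (T + a) * (T ^ (m + 1) + ((m:ℝ) + 1) * a * T ^ m) := by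
            ring_nf
            nlinarith [mul_nonneg hTa (sq_nonneg a), mul_nonneg (mul_nonneg hm hTa) (sq_nonneg a)]
        _ ≤ (T + a) * (T + a) ^ (m + 1) := by
            apply mul_le_mul_of_nonneg_left ih (by linarith)
        _ = (T + a) ^ (m + 2) := by ring

private lemma esymm_bound {ι : Type*} (S : Finset ι) (a : ι → ℝ) (ha : ∀ j, 0 ≤ a j) :
    ∀ ℓ : ℕ, (ℓ.factorial : ℝ) * ∑ u ∈ S.powersetCard ℓ, ∏ j ∈ u, a j
      ≤ (∑ j ∈ S, a j) ^ ℓ := by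
  classical
  induction S using Finset.induction_on with
  | empty =>
      intro ℓ
      cases ℓ with
      | zero => simp
      | succ m => 
          rw [Finset.powersetCard_eq_empty.2 (by simp)]
          simp
  | @insert x S hx ih =>
      intro ℓ
      have hT : 0 ≤ ∑ j ∈ S, a j := Finset.sum_nonneg fun j _ => ha j
      cases ℓ with
      | zero => simp
      | succ m =>
          rw [Finset.powersetCard_succ_insert hx, Finset.sum_union, Finset.sum_image]
          · have key : ∀ t ∈ S.powersetCard m, ∏ j ∈ insert x t, a j = a x * ∏ j ∈ t, a j := by
              intro t ht
              have hxt : x ∉ t := fun hxt => hx ((Finset.mem_powersetCard.1 ht).1 hxt)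
              rw [Finset.prod_insert hxt]
            rw [Finset.sum_congr rfl key, ← Finset.mul_sum]
            rw [Finset.sum_insert hx]
            have h1 := ih (m + 1)
            have h2 := ih m
            have hfac : ((m + 1).factorial : ℝ) = (m + 1 : ℝ) * (m.factorial : ℝ) := by
              push_cast [Nat.factorial_succ]; ring
            calc ((m + 1).factorial : ℝ) *
                  (∑ u ∈ S.powersetCard (m + 1), ∏ j ∈ u, a j + a x * ∑ u ∈ S.powersetCard m, ∏ j ∈ u, a j)
                = ((m + 1).factorial : ℝ) * ∑ u ∈ S.powersetCard (m + 1), ∏ j ∈ u, a j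
                  + (m + 1 : ℝ) * a x * ((m.factorial : ℝ) * ∑ u ∈ S.powersetCard m, ∏ j ∈ u, a j) := by
                  rw [hfac]; ring
              _ ≤ (∑ j ∈ S, a j) ^ (m + 1) + (m + 1 : ℝ) * a x * (∑ j ∈ S, a j) ^ m := by
                  gcongr
                  exact mul_nonneg (by positivity) (ha x)
              _ ≤ ((∑ j ∈ S, a j) + a x) ^ (m + 1) := binom_aux _ _ hT (ha x) m
              _ = (a x + ∑ j ∈ S, a j) ^ (m + 1) := by ring
          · intro t ht u hu htu
            have hxt : x ∉ t := fun h => hx ((Finset.mem_powersetCard.1 (by simpa using ht)).1 h)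
            have hxu : x ∉ u := fun h => hx ((Finset.mem_powersetCard.1 (by simpa using hu)).1 h)
            have := congrArg (Finset.erase · x) htu
            simpa [Finset.erase_insert hxt, Finset.erase_insert hxu] using this
          · rw [Finset.disjoint_right]
            intro u hu hu'
            simp only [Finset.mem_image] at hu
            obtain ⟨t, ht, rfl⟩ := hu
            have : insert x t ⊆ S := (Finset.mem_powersetCard.1 hu').1
            exact hx (this (Finset.mem_insert_self x t))

theorem stmt19 {ι : Type*} (κ : ℝ) (hκ1 : 1 / 2 < κ) (hκ2 : κ < 1)
    (p : ℝ) (hp : p = 2 * κ / (1 + κ)) (c K : ℝ) (hc : 0 < c) (hK : 0 ≤ K) :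
    Summable (fun ℓ : ℕ => (ℓ.factorial : ℝ) ^ (p - 1) * (c ^ (p / 2) * K) ^ ℓ) ∧
    ∀ (S : Finset ι) (b : ι → ℝ), (∀ j, 0 ≤ b j) → (∑ j ∈ S, b j ^ p) ≤ K →
      ∑ u ∈ S.powerset,
          ((u.card.factorial : ℝ) ^ 2 * ∏ j ∈ u, (c * b j ^ 2)) ^ (κ / (1 + κ))
        ≤ ∑' ℓ : ℕ, (ℓ.factorial : ℝ) ^ (p - 1) * (c ^ (p / 2) * K) ^ ℓ := by
  have hκ0 : 0 < 1 + κ := by linarith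
  have hp0 : 0 < p := by rw [hp]; positivity
  have hp1 : p < 1 := by
    rw [hp, div_lt_one hκ0]; linarith
  have hq : κ / (1 + κ) = p / 2 := by
    rw [hp]; field_simp
  set x : ℝ := c ^ (p / 2) * K with hxdef
  have hx : 0 ≤ x := mul_nonneg (Real.rpow_nonneg hc.le _) hK
  have hsum : Summable (fun ℓ : ℕ => (ℓ.factorial : ℝ) ^ (p - 1) * x ^ ℓ) := by
    rcases hx.eq_or_lt with h0 | h0
    · apply summable_of_ne_finset_zero (s := {0})
      intro ℓ hℓ
      simp only [Finset.mem_singleton] at hℓ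
      rw [← h0, zero_pow hℓ, mul_zero]
    · have hfpos : ∀ n : ℕ, 0 < (n.factorial : ℝ) ^ (p - 1) * x ^ n := by
        intro n
        have : (0:ℝ) < (n.factorial : ℝ) := by exact_mod_cast n.factorial_pos
        positivity
      apply summable_of_ratio_test_tendsto_lt_one (l := 0) one_pos
      · exact Filter.Eventually.of_forall fun n => (hfpos n).ne'
      · have heq : ∀ n : ℕ,
            ‖((n+1).factorial : ℝ) ^ (p - 1) * x ^ (n+1)‖ / ‖(n.factorial : ℝ) ^ (p - 1) * x ^ n‖
            = ((n : ℝ) + 1) ^ (p - 1) * x := by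
          intro n
          have h1 : (0:ℝ) < (n.factorial : ℝ) := by exact_mod_cast n.factorial_pos
          have h2 : ((n+1).factorial : ℝ) = ((n:ℝ) + 1) * (n.factorial : ℝ) := by
            push_cast [Nat.factorial_succ]; ring
          rw [Real.norm_of_nonneg (hfpos (n+1)).le, Real.norm_of_nonneg (hfpos n).le, h2,
            Real.mul_rpow (by positivity) h1.le, pow_succ]
          have h3 : (0:ℝ) < (n.factorial : ℝ) ^ (p - 1) := Real.rpow_pos_of_pos h1 _
          have h4 : (0:ℝ) < x ^ n := pow_pos h0 n
          field_simp
        simp only [heq]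
        have : Filter.Tendsto (fun n : ℕ => ((n : ℝ) + 1) ^ (p - 1)) Filter.atTop (nhds 0) := by
          have h5 : Filter.Tendsto (fun n : ℕ => ((n : ℝ) + 1)) Filter.atTop Filter.atTop :=
            Filter.tendsto_atTop_add_const_right _ 1 tendsto_natCast_atTop_atTop
          have h6 : Filter.Tendsto (fun y : ℝ => y ^ (p - 1)) Filter.atTop (nhds 0) := by
            have := tendsto_rpow_neg_atTop (y := 1 - p) (by linarith)
            convert this using 2
            ring_nf
          exact h6.comp h5
        simpa using this.mul_const x
  refine ⟨hsum, fun S b hb hbK => ?_⟩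
  classical
  set a : ι → ℝ := fun j => c ^ (p / 2) * b j ^ p with hadef
  have ha : ∀ j, 0 ≤ a j := fun j => mul_nonneg (Real.rpow_nonneg hc.le _) (Real.rpow_nonneg (hb j) _)
  have hSa : ∑ j ∈ S, a j ≤ x := by
    rw [hxdef, hadef, ← Finset.mul_sum]
    exact mul_le_mul_of_nonneg_left hbK (Real.rpow_nonneg hc.le _)
  have hSa0 : 0 ≤ ∑ j ∈ S, a j := Finset.sum_nonneg fun j _ => ha j
  rw [Finset.sum_powerset]
  have hterm : ∀ ℓ : ℕ, ∀ u ∈ S.powersetCard ℓ,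
      ((u.card.factorial : ℝ) ^ 2 * ∏ j ∈ u, (c * b j ^ 2)) ^ (κ / (1 + κ))
      = (ℓ.factorial : ℝ) ^ (p - 1) * ((ℓ.factorial : ℝ) * ∏ j ∈ u, a j) := by
    intro ℓ u hu
    have hcard : u.card = ℓ := (Finset.mem_powersetCard.1 hu).2
    have hf1 : (0:ℝ) < (ℓ.factorial : ℝ) := by exact_mod_cast ℓ.factorial_pos
    have hprod : (0:ℝ) ≤ ∏ j ∈ u, (c * b j ^ 2) :=
      Finset.prod_nonneg fun j _ => mul_nonneg hc.le (sq_nonneg _)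
    rw [hcard, hq, Real.mul_rpow (by positivity) hprod]
    have e1 : ((ℓ.factorial : ℝ) ^ 2) ^ (p / 2) = (ℓ.factorial : ℝ) ^ p := by
      rw [← Real.rpow_natCast (ℓ.factorial : ℝ) 2, ← Real.rpow_mul hf1.le]
      congr 1
      push_cast; ring
    have e2 : (∏ j ∈ u, (c * b j ^ 2)) ^ (p / 2) = ∏ j ∈ u, a j := by
      rw [← Real.finset_prod_rpow u _ (fun j _ => mul_nonneg hc.le (sq_nonneg _)) (p / 2)]
      apply Finset.prod_congr rfl
      intro j _
      rw [Real.mul_rpow hc.le (sq_nonneg _), hadef]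
      congr 1
      rw [← Real.rpow_natCast (b j) 2, ← Real.rpow_mul (hb j)]
      congr 1
      push_cast; ring
    rw [e1, e2]
    have e3 : (ℓ.factorial : ℝ) ^ p = (ℓ.factorial : ℝ) ^ (p - 1) * (ℓ.factorial : ℝ) := by
      rw [← Real.rpow_add_one hf1.ne' (p - 1)]
      norm_num
    rw [e3]
    ring
  calc ∑ ℓ ∈ Finset.range (S.card + 1), ∑ u ∈ S.powersetCard ℓ,
        ((u.card.factorial : ℝ) ^ 2 * ∏ j ∈ u, (c * b j ^ 2)) ^ (κ / (1 + κ))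
      ≤ ∑ ℓ ∈ Finset.range (S.card + 1), (ℓ.factorial : ℝ) ^ (p - 1) * x ^ ℓ := by
        apply Finset.sum_le_sum
        intro ℓ _
        rw [Finset.sum_congr rfl (hterm ℓ), ← Finset.mul_sum, ← Finset.mul_sum]
        have hf1 : (0:ℝ) < (ℓ.factorial : ℝ) := by exact_mod_cast ℓ.factorial_pos
        apply mul_le_mul_of_nonneg_left _ (Real.rpow_nonneg hf1.le _)
        calc (ℓ.factorial : ℝ) * ∑ u ∈ S.powersetCard ℓ, ∏ j ∈ u, a j
            ≤ (∑ j ∈ S, a j) ^ ℓ := esymm_bound S a ha ℓ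
          _ ≤ x ^ ℓ := pow_le_pow_left₀ hSa0 hSa ℓ
    _ ≤ ∑' ℓ : ℕ, (ℓ.factorial : ℝ) ^ (p - 1) * x ^ ℓ := by
        apply Summable.sum_le_tsum _ _ hsum
        intro ℓ _
        exact mul_nonneg (Real.rpow_nonneg (Nat.cast_nonneg _) _) (pow_nonneg hx ℓ)
end
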